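/- For every integer m ≥ 0 and every integer ℓ ≥ 0, s_{m,ℓ} = (m+1)! · ∑_{j=0}^{ℓ} C(ℓ,j) · S(j, m+1) · r_{m, ℓ-j}, where C(ℓ,j) is the binomial coefficient and S(j,m+1) is the Stirling number of the second kind. -/

import Mathlib

/-- `IsBPA m ℓ f` : `f` encodes a barred preferential arrangement of `[ℓ]` with `m` bars.
Each element of `[ℓ]` is assigned a section (one of the `m + 1` sections determined by the
`m` bars) together with a rank inside its section (ties are allowed: elements of the same
section with the same rank form a block); within each section the set of ranks actually used
must be an initial segment `{0, …, t-1}`, so that `f` determines, for each section, an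
ordered partition of the elements assigned to it into nonempty blocks. -/
def IsBPA (m ℓ : ℕ) (f : Fin ℓ → Fin (m + 1) × Fin ℓ) : Prop :=
  ∀ x : Fin ℓ, ∀ r : Fin ℓ, r < (f x).2 → ∃ y : Fin ℓ, (f y).1 = (f x).1 ∧ (f y).2 = r

instance (m ℓ : ℕ) : DecidablePred (IsBPA m ℓ) := fun f => by unfold IsBPA; infer_instance

/-- `bpa m ℓ` : the number of barred preferential arrangements of `[ℓ]` with `m` bars.
In particular `bpa 0 ℓ` is the number of preferential arrangements of `[ℓ]`
(the Fubini / ordered Bell number `r_ℓ`). -/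
def bpa (m ℓ : ℕ) : ℕ :=
  Fintype.card { f : Fin ℓ → Fin (m + 1) × Fin ℓ // IsBPA m ℓ f }

/-- `IsSBPA m ℓ f` : `f` encodes a *special* barred preferential arrangement, i.e. a barred
preferential arrangement in which every section is nonempty. -/
def IsSBPA (m ℓ : ℕ) (f : Fin ℓ → Fin (m + 1) × Fin ℓ) : Prop :=
  IsBPA m ℓ f ∧ ∀ j : Fin (m + 1), ∃ x : Fin ℓ, (f x).1 = j

instance (m ℓ : ℕ) : DecidablePred (IsSBPA m ℓ) := fun f => by unfold IsSBPA; infer_instance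

/-- `sbpa m ℓ` : the number of special barred preferential arrangements of `[ℓ]` with `m` bars. -/
def sbpa (m ℓ : ℕ) : ℕ :=
  Fintype.card { f : Fin ℓ → Fin (m + 1) × Fin ℓ // IsSBPA m ℓ f }

/-- The Stirling numbers of the second kind, `S(n, k)`: the number of partitions of an
`n`-element set into `k` nonempty blocks. -/
def stirling2 : ℕ → ℕ → ℕ
  | 0, 0 => 1
  | 0, _ + 1 => 0
  | _ + 1, 0 => 0
  | n + 1, k + 1 => (k + 1) * stirling2 n (k + 1) + stirling2 n k


open Finset Function

noncomputable def surjCount (j k : ℕ) : ℕ :=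
  Nat.card {s : Fin j → Fin k // Surjective s}

lemma natCard_surj_congr {α β γ δ : Type*} (e : α ≃ γ) (e' : β ≃ δ) :
    Nat.card {f : α → β // Surjective f} = Nat.card {f : γ → δ // Surjective f} :=
  Nat.card_congr <| (Equiv.arrowCongr e e').subtypeEquiv fun f => by
    constructor
    · intro h
      exact e'.surjective.comp (h.comp e.symm.surjective)
    · intro h
      have h2 := (e'.symm.surjective.comp h).comp e.surjective
      convert h2 using 1
      funext x
      simp [Equiv.arrowCongr]

lemma surjCount_zero_zero : surjCount 0 0 = 1 := by
  have : Unique {s : Fin 0 → Fin 0 // Surjective s} :=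
    ⟨⟨⟨finZeroElim, fun x => x.elim0⟩⟩, fun a => Subtype.ext (funext fun x => x.elim0)⟩
  simp [surjCount, Nat.card_unique]

lemma surjCount_zero_succ (k : ℕ) : surjCount 0 (k + 1) = 0 := by
  have : IsEmpty {s : Fin 0 → Fin (k + 1) // Surjective s} := by
    constructor
    rintro ⟨s, hs⟩
    obtain ⟨x, -⟩ := hs 0
    exact x.elim0
  simp [surjCount, Nat.card_of_isEmpty]

lemma surjCount_succ_zero (j : ℕ) : surjCount (j + 1) 0 = 0 := by
  have : IsEmpty {s : Fin (j + 1) → Fin 0 // Surjective s} := by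
    constructor
    rintro ⟨s, -⟩
    exact (s 0).elim0
  simp [surjCount, Nat.card_of_isEmpty]

section
variable {j k : ℕ}

lemma miss_last {s : Fin (j + 1) → Fin (k + 1)} (hs : Surjective s)
    (h : ¬ Surjective (fun i : Fin j => s i.castSucc)) :
    ∀ i : Fin j, s i.castSucc ≠ s (Fin.last j) := by
  simp only [Surjective, not_forall] at h
  obtain ⟨v, hv⟩ := h
  simp only [not_exists] at hv
  obtain ⟨a, ha⟩ := hs v
  have hal : a = Fin.last j := by
    rcases Fin.eq_castSucc_or_eq_last a with ⟨i, rfl⟩ | rfl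
    · exact absurd ha (hv i)
    · rfl
  subst hal
  intro i hi
  exact hv i (hi.trans ha)

noncomputable def surjSplit (j k : ℕ) :
    {s : Fin (j + 1) → Fin (k + 1) // Surjective s} ≃
      ({t : Fin j → Fin (k + 1) // Surjective t} × Fin (k + 1)) ⊕
        (Σ v : Fin (k + 1), {t : Fin j → Fin (k + 1) // ∀ w, (∃ i, t i = w) ↔ w ≠ v}) := by
  classical
  exact {
    toFun := fun s =>
      if h : Surjective (fun i : Fin j => s.1 i.castSucc) then
        .inl (⟨_, h⟩, s.1 (Fin.last j))
      else
        .inr ⟨s.1 (Fin.last j), ⟨fun i => s.1 i.castSucc, fun w => by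
          constructor
          · rintro ⟨i, rfl⟩
            exact miss_last s.2 h i
          · intro hw
            obtain ⟨a, ha⟩ := s.2 w
            rcases Fin.eq_castSucc_or_eq_last a with ⟨i, rfl⟩ | rfl
            · exact ⟨i, ha⟩
            · exact absurd ha.symm hw⟩⟩
    invFun := fun x =>
      match x with
      | .inl (t, v) => ⟨Fin.snoc t.1 v, by
          intro w
          obtain ⟨i, hi⟩ := t.2 w
          exact ⟨i.castSucc, by simpa [Fin.snoc_castSucc] using hi⟩⟩
      | .inr ⟨v, t⟩ => ⟨Fin.snoc t.1 v, by
          intro w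
          by_cases hw : w = v
          · exact ⟨Fin.last j, by simp [Fin.snoc_last, hw]⟩
          · obtain ⟨i, hi⟩ := (t.2 w).2 hw
            exact ⟨i.castSucc, by simpa [Fin.snoc_castSucc] using hi⟩⟩
    left_inv := by
      rintro ⟨s, hs⟩
      by_cases h : Surjective (fun i : Fin j => s i.castSucc)
      · simp only [dif_pos h]
        refine Subtype.ext (funext fun i => ?_)
        refine i.lastCases ?_ (fun i => ?_)
        · simp
        · simp
      · simp only [dif_neg h]
        refine Subtype.ext (funext fun i => ?_)
        refine i.lastCases ?_ (fun i => ?_)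
        · simp
        · simp
    right_inv := by
      rintro (⟨t, v⟩ | ⟨v, t⟩)
      · have hrestr : Surjective (fun i : Fin j =>
            Fin.snoc (α := fun _ => Fin (k + 1)) t.1 v i.castSucc) := by
          have he : (fun i : Fin j => Fin.snoc (α := fun _ => Fin (k + 1)) t.1 v i.castSucc)
              = t.1 := funext fun i => Fin.snoc_castSucc _ _ i
          rw [he]; exact t.2
        simp only [dif_pos hrestr]
        refine congrArg Sum.inl (Prod.ext ?_ ?_)
        · exact Subtype.ext (funext fun i => by simp)
        · simp
      · have hmiss : ¬ Surjective (fun i : Fin j =>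
            Fin.snoc (α := fun _ => Fin (k + 1)) t.1 v i.castSucc) := by
          intro hsurj
          obtain ⟨i, hi⟩ := hsurj v
          simp only [Fin.snoc_castSucc] at hi
          exact ((t.2 v).1 ⟨i, hi⟩) rfl
        simp only [dif_neg hmiss]
        have hv : Fin.snoc (α := fun _ => Fin (k + 1)) t.1 v (Fin.last j) = v :=
          Fin.snoc_last _ _
        refine congrArg Sum.inr ?_
        refine Sigma.ext hv ?_
        refine (Subtype.heq_iff_coe_eq fun x => ?_).2 ?_
        · dsimp only
          rw [hv]
        · exact funext fun i => by simp }

noncomputable def rangedEquiv (v : Fin (k + 1)) :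
    {t : Fin j → Fin (k + 1) // ∀ w, (∃ i, t i = w) ↔ w ≠ v} ≃
      {t : Fin j → {w : Fin (k + 1) // w ≠ v} // Surjective t} where
  toFun t := ⟨fun i => ⟨t.1 i, (t.2 _).1 ⟨i, rfl⟩⟩, by
    rintro ⟨w, hw⟩
    obtain ⟨i, hi⟩ := (t.2 w).2 hw
    exact ⟨i, Subtype.ext hi⟩⟩
  invFun u := ⟨fun i => (u.1 i).1, fun w => by
    constructor
    · rintro ⟨i, rfl⟩
      exact (u.1 i).2
    · intro hw
      obtain ⟨i, hi⟩ := u.2 ⟨w, hw⟩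
      exact ⟨i, congrArg Subtype.val hi⟩⟩
  left_inv t := Subtype.ext rfl
  right_inv u := Subtype.ext (funext fun i => Subtype.ext rfl)

lemma surjCount_succ_succ :
    surjCount (j + 1) (k + 1) = (k + 1) * surjCount j (k + 1) + (k + 1) * surjCount j k := by
  classical
  have e2 : ∀ v : Fin (k + 1), {w : Fin (k + 1) // w ≠ v} ≃ Fin k := fun v =>
    Fintype.equivFinOfCardEq (by simp [Fintype.card_subtype_compl])
  have hfib : ∀ v : Fin (k + 1),
      Nat.card {t : Fin j → Fin (k + 1) // ∀ w, (∃ i, t i = w) ↔ w ≠ v} = surjCount j k :=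
    fun v => (Nat.card_congr (rangedEquiv v)).trans
      (natCard_surj_congr (Equiv.refl _) (e2 v))
  calc surjCount (j + 1) (k + 1)
      = Nat.card (({t : Fin j → Fin (k + 1) // Surjective t} × Fin (k + 1)) ⊕
        (Σ v : Fin (k + 1), {t : Fin j → Fin (k + 1) // ∀ w, (∃ i, t i = w) ↔ w ≠ v})) :=
        Nat.card_congr (surjSplit j k)
    _ = (k + 1) * surjCount j (k + 1) + (k + 1) * surjCount j k := by
        rw [Nat.card_sum, Nat.card_prod, Nat.card_eq_fintype_card (α := Fin (k + 1)),
          Fintype.card_fin]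
        congr 1
        · rw [surjCount]; ring
        · rw [Nat.card_eq_fintype_card, Fintype.card_sigma]
          have h3 : ∀ v : Fin (k + 1),
              Fintype.card {t : Fin j → Fin (k + 1) // ∀ w, (∃ i, t i = w) ↔ w ≠ v}
                = surjCount j k := fun v => (Nat.card_eq_fintype_card).symm.trans (hfib v)
          simp [h3, mul_comm]

end

lemma surjCount_eq (j : ℕ) : ∀ k, surjCount j k = Nat.factorial k * stirling2 j k := by
  induction j with
  | zero =>
    rintro (_ | k)
    · simp [surjCount_zero_zero, stirling2]
    · simp [surjCount_zero_succ, stirling2]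
  | succ j ih =>
    rintro (_ | k)
    · simp [surjCount_succ_zero, stirling2]
    · rw [surjCount_succ_succ, ih, ih, stirling2, Nat.factorial_succ]
      ring

/-- the set of rank-zero elements -/
def rz {m ℓ : ℕ} (f : Fin ℓ → Fin (m + 1) × Fin ℓ) : Finset (Fin ℓ) :=
  univ.filter (fun x => ((f x).2 : ℕ) = 0)

section
variable {m ℓ : ℕ} (A : Finset (Fin ℓ))

/-- enumeration of the complement of `A` -/
noncomputable def cA : Fin (ℓ - A.card) ≃o {x : Fin ℓ // x ∈ Aᶜ} :=
  Aᶜ.orderIsoOfFin (by rw [card_compl, Fintype.card_fin])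

variable {A}

lemma mem_of_rank0 {f : Fin ℓ → Fin (m + 1) × Fin ℓ} (hA : rz f = A) {x : Fin ℓ}
    (h0 : ((f x).2 : ℕ) = 0) : x ∈ A := by
  rw [← hA]; simp [rz, h0]

lemma not_mem_of_rank_ne0 {f : Fin ℓ → Fin (m + 1) × Fin ℓ} (hA : rz f = A) {x : Fin ℓ}
    (h0 : ((f x).2 : ℕ) ≠ 0) : x ∉ A := fun hx => by
  rw [← hA] at hx
  simp [rz] at hx
  exact h0 hx

lemma rank_ne0_of_not_mem {f : Fin ℓ → Fin (m + 1) × Fin ℓ} (hA : rz f = A) {x : Fin ℓ}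
    (hx : x ∉ A) : ((f x).2 : ℕ) ≠ 0 := fun h0 => hx (mem_of_rank0 hA h0)

lemma rankLeAux {f : Fin ℓ → Fin (m + 1) × Fin ℓ} (hf : IsBPA m ℓ f) (hA : rz f = A)
    {x : Fin ℓ} (hx : x ∉ A) : ((f x).2 : ℕ) ≤ ℓ - A.card := by
  have hx0 : ((f x).2 : ℕ) ≠ 0 := rank_ne0_of_not_mem hA hx
  set r : ℕ := ((f x).2 : ℕ) with hr
  have hsub : Finset.Icc 1 r ⊆ Finset.image (fun y => ((f y).2 : ℕ)) Aᶜ := by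
    intro t ht
    rw [Finset.mem_Icc] at ht
    rcases eq_or_lt_of_le ht.2 with heq | hlt
    · exact Finset.mem_image.mpr ⟨x, Finset.mem_compl.mpr hx, heq.symm⟩
    · have htl : t < ℓ := lt_trans hlt (f x).2.isLt
      obtain ⟨y, -, hy2⟩ := hf x ⟨t, htl⟩ hlt
      have hy0 : ((f y).2 : ℕ) = t := by rw [hy2]
      have hyA : y ∉ A := not_mem_of_rank_ne0 hA (by omega)
      exact Finset.mem_image.mpr ⟨y, Finset.mem_compl.mpr hyA, hy0⟩
  have h1 : (Finset.Icc 1 r).card = r := by rw [Nat.card_Icc]; omega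
  have h2 := Finset.card_le_card hsub
  have h3 := Finset.card_image_le (s := Aᶜ) (f := fun y => ((f y).2 : ℕ))
  have h4 : (Aᶜ : Finset (Fin ℓ)).card = ℓ - A.card := by rw [card_compl, Fintype.card_fin]
  omega

variable (A)

/-- the residual barred preferential arrangement -/
noncomputable def resid (f : Fin ℓ → Fin (m + 1) × Fin ℓ) (hf : IsBPA m ℓ f)
    (hA : rz f = A) : Fin (ℓ - A.card) → Fin (m + 1) × Fin (ℓ - A.card) := fun i =>
  ((f (cA A i).1).1, ⟨((f (cA A i).1).2 : ℕ) - 1, by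
    have hy := Finset.mem_compl.mp (cA A i).2
    have h0 := rank_ne0_of_not_mem hA hy
    have h1 := rankLeAux hf hA hy
    omega⟩)

lemma resid_fst (f : Fin ℓ → Fin (m + 1) × Fin ℓ) (hf : IsBPA m ℓ f) (hA : rz f = A)
    (i : Fin (ℓ - A.card)) :
    (resid A f hf hA i).1 = (f (cA A i).1).1 := rfl

lemma resid_snd (f : Fin ℓ → Fin (m + 1) × Fin ℓ) (hf : IsBPA m ℓ f) (hA : rz f = A)
    (i : Fin (ℓ - A.card)) :
    ((resid A f hf hA i).2 : ℕ) = ((f (cA A i).1).2 : ℕ) - 1 := rfl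

/-- reassembling a special barred preferential arrangement -/
noncomputable def assemble (hA1 : A.Nonempty) (s : {x : Fin ℓ // x ∈ A} → Fin (m + 1))
    (g : Fin (ℓ - A.card) → Fin (m + 1) × Fin (ℓ - A.card)) :
    Fin ℓ → Fin (m + 1) × Fin ℓ := fun x =>
  if h : x ∈ A then (s ⟨x, h⟩, ⟨0, x.pos⟩)
  else ((g ((cA A).symm ⟨x, Finset.mem_compl.mpr h⟩)).1,
    ⟨((g ((cA A).symm ⟨x, Finset.mem_compl.mpr h⟩)).2 : ℕ) + 1, by
      have h1 : 1 ≤ A.card := Finset.card_pos.mpr hA1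
      have h2 : A.card ≤ ℓ := le_trans (Finset.card_le_univ A) (by simp)
      have h3 := ((g ((cA A).symm ⟨x, Finset.mem_compl.mpr h⟩)).2).isLt
      omega⟩)

lemma assemble_mem (hA1 : A.Nonempty) (s : {x : Fin ℓ // x ∈ A} → Fin (m + 1))
    (g : Fin (ℓ - A.card) → Fin (m + 1) × Fin (ℓ - A.card)) {x : Fin ℓ} (h : x ∈ A) :
    assemble A hA1 s g x = (s ⟨x, h⟩, ⟨0, x.pos⟩) := dif_pos h

lemma assemble_not_mem_fst (hA1 : A.Nonempty) (s : {x : Fin ℓ // x ∈ A} → Fin (m + 1))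
    (g : Fin (ℓ - A.card) → Fin (m + 1) × Fin (ℓ - A.card)) {x : Fin ℓ} (h : x ∉ A) :
    (assemble A hA1 s g x).1 = (g ((cA A).symm ⟨x, Finset.mem_compl.mpr h⟩)).1 := by
  rw [assemble, dif_neg h]

lemma assemble_not_mem_snd (hA1 : A.Nonempty) (s : {x : Fin ℓ // x ∈ A} → Fin (m + 1))
    (g : Fin (ℓ - A.card) → Fin (m + 1) × Fin (ℓ - A.card)) {x : Fin ℓ} (h : x ∉ A) :
    ((assemble A hA1 s g x).2 : ℕ)
      = ((g ((cA A).symm ⟨x, Finset.mem_compl.mpr h⟩)).2 : ℕ) + 1 := by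
  rw [assemble, dif_neg h]

variable {A}

lemma assemble_rz (hA1 : A.Nonempty) (s : {x : Fin ℓ // x ∈ A} → Fin (m + 1))
    (g : Fin (ℓ - A.card) → Fin (m + 1) × Fin (ℓ - A.card)) :
    rz (assemble A hA1 s g) = A := by
  ext x
  by_cases h : x ∈ A
  · simp [rz, h, assemble_mem A hA1 s g h]
  · have h2 := assemble_not_mem_snd A hA1 s g h
    simp [rz, h]
    omega

lemma assemble_isBPA (hA1 : A.Nonempty) {s : {x : Fin ℓ // x ∈ A} → Fin (m + 1)}
    {g : Fin (ℓ - A.card) → Fin (m + 1) × Fin (ℓ - A.card)} (hs : Surjective s)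
    (hg : IsBPA m (ℓ - A.card) g) : IsBPA m ℓ (assemble A hA1 s g) := by
  intro x r hr
  by_cases hx : x ∈ A
  · exfalso
    rw [assemble_mem A hA1 s g hx] at hr
    exact absurd hr (by simp [Fin.lt_def])
  · have hrv : (r : ℕ) < ((assemble A hA1 s g x).2 : ℕ) := hr
    rw [assemble_not_mem_snd A hA1 s g hx] at hrv
    set i := (cA A).symm ⟨x, Finset.mem_compl.mpr hx⟩ with hi
    by_cases hr0 : (r : ℕ) = 0
    · obtain ⟨a, ha⟩ := hs (g i).1
      refine ⟨a.1, ?_, ?_⟩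
      · rw [assemble_mem A hA1 s g a.2, assemble_not_mem_fst A hA1 s g hx]
        simpa using ha
      · rw [assemble_mem A hA1 s g a.2]
        exact Fin.ext (by simp [hr0.symm])
    · have hlt : ((r : ℕ) - 1) < ((g i).2 : ℕ) := by omega
      obtain ⟨i', hi1, hi2⟩ := hg i ⟨(r : ℕ) - 1, lt_trans hlt (g i).2.isLt⟩ hlt
      have hzA : ((cA A i').1 : Fin ℓ) ∉ A := Finset.mem_compl.mp (cA A i').2
      have he : (cA A).symm ⟨(cA A i').1, Finset.mem_compl.mpr hzA⟩ = i' :=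
        (cA A).symm_apply_apply i'
      refine ⟨(cA A i').1, ?_, ?_⟩
      · rw [assemble_not_mem_fst A hA1 s g hzA, assemble_not_mem_fst A hA1 s g hx, he]
        exact hi1
      · refine Fin.ext ?_
        rw [assemble_not_mem_snd A hA1 s g hzA, he]
        have hv : ((g i').2 : ℕ) = (r : ℕ) - 1 := by rw [hi2]
        omega

lemma assemble_isSBPA (hA1 : A.Nonempty) {s : {x : Fin ℓ // x ∈ A} → Fin (m + 1)}
    {g : Fin (ℓ - A.card) → Fin (m + 1) × Fin (ℓ - A.card)} (hs : Surjective s)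
    (hg : IsBPA m (ℓ - A.card) g) : IsSBPA m ℓ (assemble A hA1 s g) := by
  refine ⟨assemble_isBPA hA1 hs hg, fun c => ?_⟩
  obtain ⟨a, ha⟩ := hs c
  refine ⟨a.1, ?_⟩
  rw [assemble_mem A hA1 s g a.2]
  simpa using ha

lemma sect_surj {f : Fin ℓ → Fin (m + 1) × Fin ℓ} (hf : IsSBPA m ℓ f) (hA : rz f = A) :
    Surjective (fun x : {x : Fin ℓ // x ∈ A} => (f x.1).1) := by
  intro c
  obtain ⟨x, hx⟩ := hf.2 c
  by_cases h0 : ((f x).2 : ℕ) = 0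
  · exact ⟨⟨x, mem_of_rank0 hA h0⟩, hx⟩
  · obtain ⟨y, hy1, hy2⟩ := hf.1 x ⟨0, x.pos⟩ (by
      show (0 : ℕ) < ((f x).2 : ℕ); omega)
    have hy0 : ((f y).2 : ℕ) = 0 := by rw [hy2]
    exact ⟨⟨y, mem_of_rank0 hA hy0⟩, hy1.trans hx⟩

lemma resid_isBPA {f : Fin ℓ → Fin (m + 1) × Fin ℓ} (hf : IsBPA m ℓ f) (hA : rz f = A) :
    IsBPA m (ℓ - A.card) (resid A f hf hA) := by
  intro i r hr
  have hyc : ((cA A i).1 : Fin ℓ) ∉ A := Finset.mem_compl.mp (cA A i).2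
  have hr' : (r : ℕ) + 1 < ((f (cA A i).1).2 : ℕ) := by
    have h1 : (r : ℕ) < ((resid A f hf hA i).2 : ℕ) := hr
    rw [resid_snd] at h1
    have h0 := rank_ne0_of_not_mem hA hyc
    omega
  obtain ⟨z, hz1, hz2⟩ := hf (cA A i).1 ⟨(r : ℕ) + 1,
    lt_trans hr' (f (cA A i).1).2.isLt⟩ hr'
  have hz0 : ((f z).2 : ℕ) = (r : ℕ) + 1 := by rw [hz2]
  have hzA : z ∉ A := not_mem_of_rank_ne0 hA (by omega)
  refine ⟨(cA A).symm ⟨z, Finset.mem_compl.mpr hzA⟩, ?_, ?_⟩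
  · rw [resid_fst, resid_fst]
    have hcz : ((cA A ((cA A).symm ⟨z, Finset.mem_compl.mpr hzA⟩)).1 : Fin ℓ) = z :=
      congrArg Subtype.val ((cA A).apply_symm_apply _)
    rw [hcz, hz1]
  · refine Fin.ext ?_
    rw [resid_snd]
    have hcz : ((cA A ((cA A).symm ⟨z, Finset.mem_compl.mpr hzA⟩)).1 : Fin ℓ) = z :=
      congrArg Subtype.val ((cA A).apply_symm_apply _)
    rw [hcz, hz0]
    simp

lemma nonempty_of_sect_surj {s : {x : Fin ℓ // x ∈ A} → Fin (m + 1)}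
    (hs : Surjective s) : A.Nonempty := by
  obtain ⟨a, -⟩ := hs 0
  exact ⟨a.1, a.2⟩

/-- The fiber equivalence. -/
noncomputable def fiberEquiv (m ℓ : ℕ) (A : Finset (Fin ℓ)) :
    {f : Fin ℓ → Fin (m + 1) × Fin ℓ // IsSBPA m ℓ f ∧ rz f = A} ≃
      ({s : {x : Fin ℓ // x ∈ A} → Fin (m + 1) // Surjective s} ×
        {g : Fin (ℓ - A.card) → Fin (m + 1) × Fin (ℓ - A.card) //
          IsBPA m (ℓ - A.card) g}) where
  toFun f :=
    (⟨fun x => (f.1 x.1).1, sect_surj f.2.1 f.2.2⟩,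
     ⟨resid A f.1 f.2.1.1 f.2.2, resid_isBPA f.2.1.1 f.2.2⟩)
  invFun sg :=
    ⟨assemble A (nonempty_of_sect_surj sg.1.2) sg.1.1 sg.2.1,
     assemble_isSBPA _ sg.1.2 sg.2.2,
     assemble_rz _ sg.1.1 sg.2.1⟩
  left_inv := by
    rintro ⟨f, hf, hA⟩
    refine Subtype.ext (funext fun x => ?_)
    dsimp only
    set hA1 : A.Nonempty := nonempty_of_sect_surj (sect_surj ⟨hf.1, hf.2⟩ hA)
    by_cases h : x ∈ A
    · rw [assemble_mem A hA1 _ _ h]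
      have h0 : ((f x).2 : ℕ) = 0 := by
        rw [← hA] at h
        simpa [rz] using h
      exact Prod.ext rfl (Fin.ext (by simp [h0]))
    · have hcx : ((cA A ((cA A).symm ⟨x, Finset.mem_compl.mpr h⟩)).1 : Fin ℓ) = x :=
        congrArg Subtype.val ((cA A).apply_symm_apply _)
      have h0 : ((f x).2 : ℕ) ≠ 0 := rank_ne0_of_not_mem hA h
      refine Prod.ext ?_ (Fin.ext ?_)
      · rw [assemble_not_mem_fst A hA1 _ _ h, resid_fst, hcx]
      · rw [assemble_not_mem_snd A hA1 _ _ h, resid_snd, hcx]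
        omega
  right_inv := by
    rintro ⟨s, g⟩
    refine Prod.ext (Subtype.ext (funext fun x => ?_)) (Subtype.ext (funext fun i => ?_))
    · dsimp only
      rw [assemble_mem A _ s.1 g.1 x.2]
    · dsimp only
      have hzA : ((cA A i).1 : Fin ℓ) ∉ A := Finset.mem_compl.mp (cA A i).2
      have he : (cA A).symm ⟨(cA A i).1, Finset.mem_compl.mpr hzA⟩ = i :=
        (cA A).symm_apply_apply i
      refine Prod.ext ?_ (Fin.ext ?_)
      · rw [resid_fst, assemble_not_mem_fst A _ s.1 g.1 hzA, he]
      · rw [resid_snd, assemble_not_mem_snd A _ s.1 g.1 hzA, he]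
        omega
end


/-- For every `m ≥ 0` and `ℓ ≥ 0`,
`s_{m,ℓ} = (m+1)! · ∑_{j=0}^{ℓ} C(ℓ,j) · S(j, m+1) · r_{m, ℓ-j}`. -/
theorem sbpa_eq_factorial_mul_sum (m ℓ : ℕ) :
    sbpa m ℓ =
      Nat.factorial (m + 1) *
        ∑ j ∈ Finset.range (ℓ + 1), Nat.choose ℓ j * stirling2 j (m + 1) * bpa m (ℓ - j) := by
  classical
  have hfib : ∀ A : Finset (Fin ℓ),
      Fintype.card {f : Fin ℓ → Fin (m + 1) × Fin ℓ // IsSBPA m ℓ f ∧ rz f = A}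
        = surjCount A.card (m + 1) * bpa m (ℓ - A.card) := by
    intro A
    rw [Fintype.card_congr (fiberEquiv m ℓ A), Fintype.card_prod]
    congr 1
    · rw [← Nat.card_eq_fintype_card,
        natCard_surj_congr (A.orderIsoOfFin rfl).toEquiv.symm (Equiv.refl (Fin (m + 1)))]
      rfl
  have h1 : sbpa m ℓ = ∑ A : Finset (Fin ℓ), surjCount A.card (m + 1) * bpa m (ℓ - A.card) := by
    rw [sbpa, Fintype.card_subtype]
    rw [Finset.card_eq_sum_card_fiberwise
      (f := fun f => rz f) (t := (univ : Finset (Finset (Fin ℓ))))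
      (fun x _ => Finset.mem_univ _)]
    refine Finset.sum_congr rfl fun A _ => ?_
    rw [Finset.filter_filter, ← hfib A, Fintype.card_subtype]
  rw [h1]
  have h2 : ∀ A : Finset (Fin ℓ), surjCount A.card (m + 1) * bpa m (ℓ - A.card)
      = Nat.factorial (m + 1) * stirling2 A.card (m + 1) * bpa m (ℓ - A.card) := fun A => by
    rw [surjCount_eq]
  calc ∑ A : Finset (Fin ℓ), surjCount A.card (m + 1) * bpa m (ℓ - A.card)
      = ∑ A ∈ (univ : Finset (Fin ℓ)).powerset,
          Nat.factorial (m + 1) * stirling2 A.card (m + 1) * bpa m (ℓ - A.card) := by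
        rw [Finset.powerset_univ]
        exact Finset.sum_congr rfl fun A _ => h2 A
    _ = ∑ j ∈ Finset.range ((univ : Finset (Fin ℓ)).card + 1),
          ∑ A ∈ Finset.powersetCard j (univ : Finset (Fin ℓ)),
            Nat.factorial (m + 1) * stirling2 A.card (m + 1) * bpa m (ℓ - A.card) := by
        rw [Finset.powerset_card_disjiUnion]; exact Finset.sum_disjiUnion _ _ _
    _ = Nat.factorial (m + 1) *
          ∑ j ∈ Finset.range (ℓ + 1), Nat.choose ℓ j * stirling2 j (m + 1) * bpa m (ℓ - j) := by
        rw [Finset.card_univ, Fintype.card_fin, Finset.mul_sum]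
        refine Finset.sum_congr rfl fun j hj => ?_
        have hcard : ∀ A ∈ Finset.powersetCard j (univ : Finset (Fin ℓ)), A.card = j :=
          fun A hA => (Finset.mem_powersetCard.mp hA).2
        rw [Finset.sum_congr rfl (fun A hA => by rw [hcard A hA])]
        rw [Finset.sum_const, Finset.card_powersetCard, Finset.card_univ, Fintype.card_fin,
          smul_eq_mul]
        ring
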